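/- Let G be a torsion-free abelian group, A, B, C finite nonempty multisets over G, and g ∈ G. If A + C + {g} = B + C (pairwise-sum multisets, where {g} is the singleton multiset), then the translate A + {g} equals B. -/

import Mathlib

/-- Pairwise sum of multisets over an additive group. -/
def pSum {G : Type*} [AddCommGroup G] (A B : Multiset G) : Multiset G :=
  (A.product B).map fun p => p.1 + p.2

section Aux

variable {G : Type*} [AddCommGroup G]

/-- The "generating function" of a multiset in the group algebra. -/
noncomputable def msToAlg (A : Multiset G) : AddMonoidAlgebra ℤ G :=
  (A.map fun a => AddMonoidAlgebra.single a (1 : ℤ)).sum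

lemma msToAlg_zero : msToAlg (0 : Multiset G) = 0 := by simp [msToAlg]

lemma msToAlg_cons (a : G) (A : Multiset G) :
    msToAlg (a ::ₘ A) = AddMonoidAlgebra.single a 1 + msToAlg A := by
  simp [msToAlg]

lemma msToAlg_add (A B : Multiset G) : msToAlg (A + B) = msToAlg A + msToAlg B := by
  simp [msToAlg]

open scoped Classical in
lemma msToAlg_apply (A : Multiset G) (x : G) : (msToAlg A).coeff x = (A.count x : ℤ) := by
  induction A using Multiset.induction with
  | empty =>
      rw [msToAlg_zero]
      simp
  | cons a A ih =>
      rw [msToAlg_cons]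
      rw [AddMonoidAlgebra.coeff_add, Finsupp.add_apply, ih,
        AddMonoidAlgebra.coeff_single, Finsupp.single_apply, Multiset.count_cons]
      by_cases hax : x = a <;> simp [hax, eq_comm, add_comm]

lemma msToAlg_injective : Function.Injective (msToAlg (G := G)) := by
  classical
  intro A B hAB
  ext x
  have : (A.count x : ℤ) = (B.count x : ℤ) := by
    rw [← msToAlg_apply, ← msToAlg_apply, hAB]
  exact_mod_cast this

lemma msToAlg_ne_zero {A : Multiset G} (hA : A ≠ 0) : msToAlg A ≠ 0 := by
  classical
  obtain ⟨a, ha⟩ := Multiset.exists_mem_of_ne_zero hA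
  intro h
  have h2 : (A.count a : ℤ) = 0 := by
    rw [← msToAlg_apply, h]; rfl
  rw [Int.natCast_eq_zero, Multiset.count_eq_zero] at h2
  exact h2 ha

lemma pSum_zero_left (B : Multiset G) : pSum 0 B = 0 := by
  simp [pSum, Multiset.product]

lemma pSum_cons (a : G) (A B : Multiset G) :
    pSum (a ::ₘ A) B = B.map (fun b => a + b) + pSum A B := by
  simp [pSum, Multiset.product, Multiset.map_map, Function.comp]

lemma msToAlg_map_add (a : G) (B : Multiset G) :
    msToAlg (B.map fun b => a + b) = AddMonoidAlgebra.single a 1 * msToAlg B := by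
  induction B using Multiset.induction with
  | empty => simp [msToAlg]
  | cons b B ihB =>
      rw [Multiset.map_cons, msToAlg_cons, msToAlg_cons, ihB, mul_add,
        AddMonoidAlgebra.single_mul_single, mul_one]

lemma msToAlg_pSum (A B : Multiset G) :
    msToAlg (pSum A B) = msToAlg A * msToAlg B := by
  induction A using Multiset.induction with
  | empty => rw [pSum_zero_left, msToAlg_zero, zero_mul]
  | cons a A ih =>
      rw [pSum_cons, msToAlg_add, ih, msToAlg_map_add, msToAlg_cons, add_mul]

open TensorProduct in
lemma uniqueSums_of_torsionFree (hG : ∀ g : G, g ≠ 0 → ¬IsOfFinAddOrder g) : UniqueSums G := by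
  haveI : IsAddTorsionFree G := IsAddTorsionFree.of_not_isOfFinAddOrder hG
  haveI : NoZeroSMulDivisors ℤ G := inferInstance
  let f : G →ₗ[ℤ] ℚ ⊗[ℤ] G := TensorProduct.mk ℤ ℚ G 1
  have hbc : IsBaseChange ℚ f := TensorProduct.isBaseChange ℤ G ℚ
  haveI : IsLocalizedModule (nonZeroDivisors ℤ) f :=
    (isLocalizedModule_iff_isBaseChange (nonZeroDivisors ℤ) ℚ f).mpr hbc
  have hinj : Function.Injective f := by
    intro x y hxy
    obtain ⟨c, hc⟩ := IsLocalizedModule.exists_of_eq (S := nonZeroDivisors ℤ) (f := f) hxy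
    have hc0 : (c : ℤ) ≠ 0 := nonZeroDivisors.coe_ne_zero c
    have hz : (c : ℤ) • (x - y) = 0 := by
      rw [smul_sub, sub_eq_zero]
      exact hc
    rcases smul_eq_zero.mp hz with h | h
    · exact absurd h hc0
    · exact sub_eq_zero.mp h
  haveI : TwoUniqueSums G := TwoUniqueSums.of_injective_addHom f.toAddMonoidHom.toAddHom hinj inferInstance
  exact TwoUniqueSums.toUniqueSums G

end Aux

theorem multiset_cancellation_with_translation {G : Type*} [AddCommGroup G]
    (hG : ∀ g : G, g ≠ 0 → ¬IsOfFinAddOrder g)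
    (A B C : Multiset G) (hA : A ≠ 0) (hB : B ≠ 0) (hC : C ≠ 0) (g : G)
    (h : pSum (pSum A C) {g} = pSum B C) : pSum A {g} = B := by
  haveI : UniqueSums G := uniqueSums_of_torsionFree hG
  apply msToAlg_injective
  have halg := congrArg msToAlg h
  rw [msToAlg_pSum, msToAlg_pSum, msToAlg_pSum] at halg
  have hC' : msToAlg C ≠ 0 := msToAlg_ne_zero hC
  have key : (msToAlg A * msToAlg {g} - msToAlg B) * msToAlg C = 0 := by
    rw [sub_mul, sub_eq_zero, mul_right_comm]
    exact halg
  rcases mul_eq_zero.mp key with h0 | h0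
  · rw [msToAlg_pSum, sub_eq_zero.mp h0]
  · exact absurd h0 hC'
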